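/- Let Λ : [0,∞) → (0,∞) be a C² function with Λ' < 0, Λ(t) → 0 as t → ∞, and suppose Λ''(t) ≥ -K·Λ'(t) + θ·Λ'(t)²/Λ(t) for all t ≥ 0, where K > 0 and θ ∈ [0,1). Then Λ(0)^(1-θ)/(1-θ) ≤ -Λ'(0)/(K·Λ(0)^θ). -/

import Mathlib

open Filter Topology

theorem stmt_4 (Λ : ℝ → ℝ) (K θ : ℝ) (hK : 0 < K) (hθ0 : 0 ≤ θ) (hθ1 : θ < 1)
    (hC2 : ContDiff ℝ 2 Λ)
    (hpos : ∀ t, 0 ≤ t → 0 < Λ t)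
    (hdec : ∀ t, 0 ≤ t → deriv Λ t < 0)
    (hlim : Tendsto Λ atTop (𝓝 0))
    (hODE : ∀ t, 0 ≤ t →
      deriv (deriv Λ) t ≥ -K * deriv Λ t + θ * (deriv Λ t) ^ 2 / Λ t) :
    Λ 0 ^ (1 - θ) / (1 - θ) ≤ -deriv Λ 0 / (K * Λ 0 ^ θ) := by
  have hΛdiff : Differentiable ℝ Λ := hC2.differentiable two_ne_zero
  have hΛ'diff : Differentiable ℝ (deriv Λ) := by
    have h : ContDiff ℝ ((1:ℕ∞)+1) Λ := by exact_mod_cast hC2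
    exact ((contDiff_succ_iff_deriv.mp h).2.2).differentiable one_ne_zero
  have h1θ : (1:ℝ) - θ ≠ 0 := by intro h; rw [sub_eq_zero] at h; exact absurd h.symm (ne_of_lt hθ1)
  -- the function g t = exp(Kt) * (-Λ'(t)) * Λ(t)^(-θ)
  set g : ℝ → ℝ := fun t => Real.exp (K * t) * (-deriv Λ t) * Λ t ^ (-θ) with hg
  -- derivative of g at points where Λ t ≠ 0
  have hgderiv : ∀ t, Λ t ≠ 0 → HasDerivAt g
      (Real.exp (K * t) * K * (-deriv Λ t) * Λ t ^ (-θ)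
        + Real.exp (K * t) * (-(deriv (deriv Λ) t)) * Λ t ^ (-θ)
        + Real.exp (K * t) * (-deriv Λ t) * (deriv Λ t * (-θ) * Λ t ^ (-θ - 1))) t := by
    intro t ht
    have h0 : HasDerivAt (fun s => Real.exp (K * s)) (Real.exp (K * t) * K) t := by
      simpa using ((hasDerivAt_id t).const_mul K).exp
    have h1 : HasDerivAt (fun s => -deriv Λ s) (-(deriv (deriv Λ) t)) t :=
      ((hΛ'diff t).hasDerivAt).neg
    have h2 : HasDerivAt (fun s => Λ s ^ (-θ)) (deriv Λ t * (-θ) * Λ t ^ (-θ - 1)) t :=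
      ((hΛdiff t).hasDerivAt).rpow_const (Or.inl ht)
    have := ((h0.mul h1).mul h2)
    refine this.congr_deriv ?_
    simp only [Pi.mul_apply]
    ring
  -- on [0,∞), g is antitone
  have hgcont : ContinuousOn g (Set.Ici (0:ℝ)) := by
    apply ContinuousOn.mul
    · exact ((Real.continuous_exp.comp (continuous_const.mul continuous_id)).continuousOn).mul
        (hΛ'diff.continuous.neg.continuousOn)
    · exact (hΛdiff.continuous.continuousOn).rpow_const
        (fun x hx => Or.inl (ne_of_gt (hpos x hx)))
  have hganti : AntitoneOn g (Set.Ici (0:ℝ)) := by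
    apply antitoneOn_of_deriv_nonpos (convex_Ici 0) hgcont
    · intro x hx
      rw [interior_Ici] at hx
      exact (hgderiv x (ne_of_gt (hpos x (le_of_lt hx)))).differentiableAt.differentiableWithinAt
    · intro x hx
      rw [interior_Ici] at hx
      have hx0 : (0:ℝ) ≤ x := le_of_lt hx
      have hL : 0 < Λ x := hpos x hx0
      rw [(hgderiv x (ne_of_gt hL)).deriv]
      have hODEx := hODE x hx0
      have hrw : Λ x ^ (-θ - 1) = Λ x ^ (-θ) / Λ x := by
        rw [sub_eq_add_neg, Real.rpow_add hL, Real.rpow_neg_one]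
        ring
      rw [hrw]
      have hexp : 0 < Real.exp (K * x) := Real.exp_pos _
      have hrp : 0 < Λ x ^ (-θ) := Real.rpow_pos_of_pos hL _
      have key : -(K * deriv Λ x) - deriv (deriv Λ) x + θ * (deriv Λ x) ^ 2 / Λ x ≤ 0 := by
        have : -K * deriv Λ x + θ * (deriv Λ x) ^ 2 / Λ x ≤ deriv (deriv Λ) x := hODEx
        linarith
      have expand : Real.exp (K * x) * K * (-deriv Λ x) * Λ x ^ (-θ)
          + Real.exp (K * x) * (-(deriv (deriv Λ) x)) * Λ x ^ (-θ)
          + Real.exp (K * x) * (-deriv Λ x) * (deriv Λ x * (-θ) * (Λ x ^ (-θ) / Λ x))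
          = Real.exp (K * x) * Λ x ^ (-θ) *
            (-(K * deriv Λ x) - deriv (deriv Λ) x + θ * (deriv Λ x) ^ 2 / Λ x) := by
        field_simp
        ring
      rw [expand]
      exact mul_nonpos_of_nonneg_of_nonpos (le_of_lt (mul_pos hexp hrp)) key
  -- the function ψ
  set G0 : ℝ := g 0 with hG0
  set ψ : ℝ → ℝ := fun t => Λ t ^ (1 - θ) / (1 - θ) - G0 / K * Real.exp (-(K * t)) with hψ
  have hψderiv : ∀ t, Λ t ≠ 0 → HasDerivAt ψ
      (deriv Λ t * (1 - θ) * Λ t ^ (1 - θ - 1) / (1 - θ)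
        - G0 / K * (Real.exp (-(K * t)) * (-K))) t := by
    intro t ht
    have h1 : HasDerivAt (fun s => Λ s ^ (1 - θ)) (deriv Λ t * (1 - θ) * Λ t ^ (1 - θ - 1)) t :=
      ((hΛdiff t).hasDerivAt).rpow_const (Or.inl ht)
    have h2 : HasDerivAt (fun s => Real.exp (-(K * s))) (Real.exp (-(K * t)) * (-K)) t := by
      simpa using (((hasDerivAt_id t).const_mul K).neg).exp
    exact (h1.div_const (1 - θ)).sub (h2.const_mul (G0 / K))
  have hψmono : MonotoneOn ψ (Set.Ici (0:ℝ)) := by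
    apply monotoneOn_of_deriv_nonneg (convex_Ici 0)
    · apply ContinuousOn.sub
      · exact ((hΛdiff.continuous.continuousOn).rpow_const
          (fun x hx => Or.inl (ne_of_gt (hpos x hx)))).div_const _
      · exact (continuous_const.mul
          (Real.continuous_exp.comp (continuous_const.mul continuous_id).neg)).continuousOn
    · intro x hx
      rw [interior_Ici] at hx
      exact (hψderiv x (ne_of_gt (hpos x (le_of_lt hx)))).differentiableAt.differentiableWithinAt
    · intro x hx
      rw [interior_Ici] at hx
      have hx0 : (0:ℝ) ≤ x := le_of_lt hx
      have hL : 0 < Λ x := hpos x hx0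
      rw [(hψderiv x (ne_of_gt hL)).deriv]
      have hgle : g x ≤ G0 := hganti (Set.self_mem_Ici) (Set.mem_Ici.mpr hx0) hx0
      have heq : Real.exp (-(K * x)) * Real.exp (K * x) = 1 := by
        rw [← Real.exp_add]; simp
      have key : -deriv Λ x * Λ x ^ (-θ) ≤ G0 * Real.exp (-(K * x)) := by
        have hmul := mul_le_mul_of_nonneg_left hgle (le_of_lt (Real.exp_pos (-(K * x))))
        rw [hg] at hmul
        calc -deriv Λ x * Λ x ^ (-θ)
            = Real.exp (-(K * x)) * (Real.exp (K * x) * (-deriv Λ x) * Λ x ^ (-θ)) := by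
              rw [show Real.exp (-(K * x)) * (Real.exp (K * x) * (-deriv Λ x) * Λ x ^ (-θ))
                  = (Real.exp (-(K * x)) * Real.exp (K * x)) * ((-deriv Λ x) * Λ x ^ (-θ)) by ring,
                heq]; ring
          _ ≤ Real.exp (-(K * x)) * G0 := hmul
          _ = G0 * Real.exp (-(K * x)) := by ring
      have e1 : deriv Λ x * (1 - θ) * Λ x ^ (1 - θ - 1) / (1 - θ) = deriv Λ x * Λ x ^ (-θ) := by
        rw [show (1:ℝ) - θ - 1 = -θ by ring]
        field_simp
      have e2 : G0 / K * (Real.exp (-(K * x)) * (-K)) = -(G0 * Real.exp (-(K * x))) := by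
        field_simp
      rw [e1, e2]
      linarith
  -- limits
  have hψlim : Tendsto ψ atTop (𝓝 0) := by
    have h1 : Tendsto (fun t => Λ t ^ (1 - θ) / (1 - θ)) atTop (𝓝 0) := by
      have hc : ContinuousAt (fun x : ℝ => x ^ (1 - θ)) 0 :=
        Real.continuousAt_rpow_const 0 (1 - θ) (Or.inr (by linarith))
      have hcomp := (hc.tendsto.comp hlim)
      rw [Real.zero_rpow h1θ] at hcomp
      simpa using hcomp.div_const (1 - θ)
    have h2 : Tendsto (fun t => G0 / K * Real.exp (-(K * t))) atTop (𝓝 0) := by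
      have hKt : Tendsto (fun t : ℝ => K * t) atTop atTop :=
        Tendsto.const_mul_atTop hK tendsto_id
      have hexp := Real.tendsto_exp_neg_atTop_nhds_zero.comp hKt
      have h' := hexp.const_mul (G0 / K)
      simpa using h'
    have := h1.sub h2
    simpa using this
  have hle : ψ 0 ≤ 0 := by
    apply ge_of_tendsto hψlim
    filter_upwards [eventually_ge_atTop (0:ℝ)] with t ht
    exact hψmono Set.self_mem_Ici (Set.mem_Ici.mpr ht) ht
  -- unfold ψ 0
  have hL0 : 0 < Λ 0 := hpos 0 le_rfl
  have hG0eq : G0 = -deriv Λ 0 * Λ 0 ^ (-θ) := by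
    simp [hG0, hg]
  have hψ0 : ψ 0 = Λ 0 ^ (1 - θ) / (1 - θ) - G0 / K := by
    simp [hψ]
  rw [hψ0, hG0eq] at hle
  have hrpow : Λ 0 ^ (-θ) = (Λ 0 ^ θ)⁻¹ := Real.rpow_neg (le_of_lt hL0) θ
  rw [hrpow] at hle
  have hfin : -deriv Λ 0 / (K * Λ 0 ^ θ) = -deriv Λ 0 * (Λ 0 ^ θ)⁻¹ / K := by
    rw [mul_comm K (Λ 0 ^ θ), ← div_div, div_eq_mul_inv (-deriv Λ 0)]
  rw [hfin]
  linarith
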